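/- Let (s,t) be a Golay complementary pair of length N (i.e., Λ(s)(τ) + Λ(t)(τ) = 0 for all τ ≠ 0, entries unimodular) and b a unimodular sequence of length P. Then (s⊗b, t⊗b) is a type-II Z-complementary pair of length NP with ZCZ width NP-P+1: Λ(s⊗b)(τ) + Λ(t⊗b)(τ) = 0 for all τ with P-1 < |τ| < NP. -/

import Mathlib

open Finset

/-- Aperiodic cross-correlation of length-`L` sequences `x, y` at integer shift `τ`. -/
noncomputable def acc (L : ℕ) (x y : ℕ → ℂ) (τ : ℤ) : ℂ :=
  if 0 ≤ τ ∧ τ < (L : ℤ) then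
    ∑ i ∈ Finset.range (L - τ.toNat), x (i + τ.toNat) * (starRingEnd ℂ) (y i)
  else if -(L : ℤ) < τ ∧ τ < 0 then
    ∑ i ∈ Finset.range (L - (-τ).toNat), x i * (starRingEnd ℂ) (y (i + (-τ).toNat))
  else 0

/-- Aperiodic autocorrelation. -/
noncomputable def aac (L : ℕ) (x : ℕ → ℂ) (τ : ℤ) : ℂ := acc L x x τ

/-- Kronecker product of a sequence with a length-`P` sequence: `(a ⊗ b)_(nP+p) = a_n b_p`. -/
noncomputable def kron (P : ℕ) (a b : ℕ → ℂ) : ℕ → ℂ := fun n => a (n / P) * b (n % P)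

/-- Aperiodic cross-correlation sum of two codes (row-wise sum). -/
noncomputable def ccs {M : ℕ} (L : ℕ) (A B : Fin M → ℕ → ℂ) (τ : ℤ) : ℂ :=
  ∑ ν, acc L (A ν) (B ν) τ

lemma aac_nat (N : ℕ) (a : ℕ → ℂ) (q : ℕ) :
    aac N a (q : ℤ) = ∑ m ∈ Finset.range (N - q), a (m + q) * (starRingEnd ℂ) (a m) := by
  unfold aac acc
  by_cases h : q < N
  · rw [if_pos ⟨by positivity, by exact_mod_cast h⟩]
    simp
  · rw [if_neg (by omega), if_neg (by omega), Nat.sub_eq_zero_of_le (le_of_not_gt h)]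
    simp

lemma aac_neg_nat (L : ℕ) (x : ℕ → ℂ) (q : ℕ) :
    aac L x (-(q : ℤ)) = (starRingEnd ℂ) (aac L x (q : ℤ)) := by
  unfold aac acc
  by_cases h : q < L
  · by_cases h0 : q = 0
    · subst h0
      simp only [Nat.cast_zero, neg_zero]
      rw [if_pos ⟨le_refl _, by exact_mod_cast h⟩, map_sum]
      simp only [Int.toNat_zero, Nat.add_zero, map_mul, RingHomInvPair.comp_apply_eq]
      exact Finset.sum_congr rfl fun i _ => mul_comm _ _
    · rw [if_neg (by omega), if_pos ⟨by omega, by omega⟩,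
        if_pos ⟨by positivity, by exact_mod_cast h⟩, map_sum]
      simp only [neg_neg, Int.toNat_natCast]
      exact Finset.sum_congr rfl fun i _ => by
        rw [map_mul, RingHomInvPair.comp_apply_eq, mul_comm]
  · rw [if_neg (by omega), if_neg (by omega), if_neg (by omega), if_neg (by omega), map_zero]

lemma sum_range_mul {M : Type*} [AddCommMonoid M] (g : ℕ → M) (A B : ℕ) :
    ∑ i ∈ Finset.range (A * B), g i = ∑ m ∈ Finset.range A, ∑ p ∈ Finset.range B, g (m * B + p) := by
  induction A with
  | zero => simp
  | succ n ih =>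
    rw [Nat.succ_mul, Finset.sum_range_add, ih, Finset.sum_range_succ]

lemma kron_apply (P : ℕ) (a b : ℕ → ℂ) (m p : ℕ) (hp : p < P) :
    kron P a b (m * P + p) = a m * b p := by
  have hP : 0 < P := by omega
  unfold kron
  rw [mul_comm m P, Nat.mul_add_div hP, Nat.div_eq_of_lt hp, Nat.mul_add_mod,
    Nat.mod_eq_of_lt hp, Nat.add_zero]

lemma kron_aac (N P q r : ℕ) (a b : ℕ → ℂ) (hr : r < P) (hqN : q < N) :
    aac (N * P) (kron P a b) (((q * P + r : ℕ) : ℤ)) =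
      (∑ p ∈ Finset.range (P - r), b (p + r) * (starRingEnd ℂ) (b p)) * aac N a (q : ℤ) +
      (∑ j ∈ Finset.range r, b j * (starRingEnd ℂ) (b (P - r + j))) * aac N a ((q + 1 : ℕ) : ℤ) := by
  set c := P - r with hc
  have hcr : c + r = P := by omega
  rw [aac_nat N a q, aac_nat N a (q+1)]
  set g : ℕ → ℂ := fun i =>
    kron P a b (i + (q * P + r)) * (starRingEnd ℂ) (kron P a b i) with hg
  have hNP : N * P - (q * P + r) = (N - q - 1) * P + c := by
    have h2 : N * P = (N - q - 1) * P + q * P + P := by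
      have h3 : N = (N - q - 1) + q + 1 := by omega
      nth_rewrite 1 [h3]; ring
    omega
  have T1 : ∀ m p, p < c → g (m * P + p) =
      (b (p + r) * (starRingEnd ℂ) (b p)) * (a (m + q) * (starRingEnd ℂ) (a m)) := by
    intro m p hp
    have hidx : m * P + p + (q * P + r) = (m + q) * P + (p + r) := by
      have h2 : (m + q) * P = m * P + q * P := by ring
      omega
    simp only [hg, hidx, kron_apply P a b (m + q) (p + r) (by omega),
      kron_apply P a b m p (by omega), map_mul]
    ring
  have T2 : ∀ m j, j < r → g (m * P + (c + j)) =
      (b j * (starRingEnd ℂ) (b (c + j))) * (a (m + q + 1) * (starRingEnd ℂ) (a m)) := by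
    intro m j hj
    have hidx : m * P + (c + j) + (q * P + r) = (m + q + 1) * P + j := by
      have h2 : (m + q + 1) * P = m * P + q * P + P := by ring
      omega
    simp only [hg, hidx, kron_apply P a b (m + q + 1) j (by omega),
      kron_apply P a b m (c + j) (by omega), map_mul]
    ring
  have inner : ∀ m, (∑ p ∈ Finset.range P, g (m * P + p)) =
      (∑ p ∈ Finset.range c, b (p + r) * (starRingEnd ℂ) (b p)) * (a (m + q) * (starRingEnd ℂ) (a m))
      + (∑ j ∈ Finset.range r, b j * (starRingEnd ℂ) (b (c + j))) * (a (m + q + 1) * (starRingEnd ℂ) (a m)) := by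
    intro m
    rw [show Finset.range P = Finset.range (c + r) by rw [hcr], Finset.sum_range_add,
      Finset.sum_mul, Finset.sum_mul]
    congr 1
    · exact Finset.sum_congr rfl fun p hp => T1 m p (mem_range.mp hp)
    · exact Finset.sum_congr rfl fun j hj => T2 m j (mem_range.mp hj)
  calc aac (N * P) (kron P a b) (((q * P + r : ℕ) : ℤ))
      = ∑ i ∈ Finset.range (N * P - (q * P + r)), g i := by rw [aac_nat]
    _ = ∑ m ∈ Finset.range (N - q - 1), ∑ p ∈ Finset.range P, g (m * P + p)
        + ∑ i ∈ Finset.range c, g ((N - q - 1) * P + i) := by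
        rw [hNP, Finset.sum_range_add, sum_range_mul]
    _ = (∑ m ∈ Finset.range (N - q - 1),
          ((∑ p ∈ Finset.range c, b (p + r) * (starRingEnd ℂ) (b p)) * (a (m + q) * (starRingEnd ℂ) (a m))
          + (∑ j ∈ Finset.range r, b j * (starRingEnd ℂ) (b (c + j))) * (a (m + q + 1) * (starRingEnd ℂ) (a m))))
        + (∑ p ∈ Finset.range c, b (p + r) * (starRingEnd ℂ) (b p)) * (a ((N - q - 1) + q) * (starRingEnd ℂ) (a (N - q - 1))) := by
        congr 1
        · exact Finset.sum_congr rfl fun m _ => inner m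
        · rw [Finset.sum_mul]
          exact Finset.sum_congr rfl fun p hp => T1 (N - q - 1) p (mem_range.mp hp)
    _ = (∑ p ∈ Finset.range c, b (p + r) * (starRingEnd ℂ) (b p)) *
          (∑ m ∈ Finset.range (N - q), a (m + q) * (starRingEnd ℂ) (a m))
        + (∑ j ∈ Finset.range r, b j * (starRingEnd ℂ) (b (c + j))) *
          (∑ m ∈ Finset.range (N - q - 1), a (m + q + 1) * (starRingEnd ℂ) (a m)) := by
        have hsq : ∀ f : ℕ → ℂ, ∑ m ∈ Finset.range (N - q), f m
            = ∑ m ∈ Finset.range (N - q - 1), f m + f (N - q - 1) := by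
          intro f
          rw [show N - q = (N - q - 1) + 1 by omega]
          simp only [Nat.add_sub_cancel]
          rw [Finset.sum_range_succ]
        rw [Finset.sum_add_distrib, ← Finset.mul_sum, ← Finset.mul_sum,
          hsq (fun m => a (m + q) * (starRingEnd ℂ) (a m))]
        ring
    _ = _ := by congr 2

theorem stmt4 (N P : ℕ) (s t : ℕ → ℂ)
    (hs : ∀ i < N, ‖s i‖ = 1) (ht : ∀ i < N, ‖t i‖ = 1)
    (hGCP : ∀ τ : ℤ, τ ≠ 0 → aac N s τ + aac N t τ = 0)
    (b : ℕ → ℂ) (hb : ∀ p < P, ‖b p‖ = 1) :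
    ∀ τ : ℤ, (P : ℤ) - 1 < |τ| → |τ| < (N : ℤ) * P →
      aac (N * P) (kron P s b) τ + aac (N * P) (kron P t b) τ = 0 := by
  intro τ hlo hhi
  have habs : (0 : ℤ) ≤ |τ| := abs_nonneg τ
  set u : ℕ := |τ|.toNat with hudef
  have hu : (u : ℤ) = |τ| := Int.toNat_of_nonneg habs
  rw [← hu] at hlo hhi
  have huNP : u < N * P := by exact_mod_cast hhi
  have hP : 0 < P := by
    rcases Nat.eq_zero_or_pos P with h | h
    · subst h; simp at huNP
    · exact h
  have hPu : P ≤ u := by omega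
  set q := u / P with hqdef
  set r := u % P with hrdef
  have hr : r < P := Nat.mod_lt _ hP
  have hq1 : 1 ≤ q := by
    rw [hqdef]
    exact Nat.one_le_div_iff hP |>.mpr hPu
  have hqN : q < N := by
    rw [hqdef]
    exact (Nat.div_lt_iff_lt_mul hP).mpr (by omega)
  have hu2 : q * P + r = u := by
    rw [hqdef, hrdef, mul_comm]
    exact Nat.div_add_mod u P
  have key : aac (N * P) (kron P s b) ((u : ℤ)) + aac (N * P) (kron P t b) ((u : ℤ)) = 0 := by
    rw [← hu2, kron_aac N P q r s b hr hqN, kron_aac N P q r t b hr hqN]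
    have h1 := hGCP ((q : ℕ) : ℤ) (by exact_mod_cast (by omega : q ≠ 0))
    have h2 := hGCP ((q + 1 : ℕ) : ℤ) (by exact_mod_cast (by omega : q + 1 ≠ 0))
    linear_combination (∑ p ∈ Finset.range (P - r), b (p + r) * (starRingEnd ℂ) (b p)) * h1 +
      (∑ j ∈ Finset.range r, b j * (starRingEnd ℂ) (b (P - r + j))) * h2
  rcases le_or_gt 0 τ with h | h
  · rw [show τ = (u : ℤ) by rw [hu, abs_of_nonneg h]]
    exact key
  · rw [show τ = -(u : ℤ) by rw [hu, abs_of_neg h]; ring, aac_neg_nat, aac_neg_nat,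
      ← map_add, key, map_zero]
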